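/- There exist functions L, C₀ : [0,∞) → (0,∞) such that the following holds for every δ ≥ 0. Let (X,d) be a proper geodesic metric space which is Gromov δ-hyperbolic, and let g be an isometry of X whose displacement ρ_g = inf_{y} d(y,g(y)) is attained and satisfies ρ_g ≥ L(δ). Then for every x in the set Min(g) = {y ∈ X : d(y,g(y)) = ρ_g} of points of minimal displacement and every map f : ℝ → X with f(0) = x, f(t+ρ_g) = g(f(t)) for all t ∈ ℝ, and d(f(s),f(t)) = |s−t| for all s,t ∈ [0,ρ_g], one has Min(g) ⊆ {y ∈ X : dist(y, f(ℝ)) ≤ C₀(δ)}. -/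

import Mathlib

/-- The Gromov product `(x|y)_w = ½(d(x,w) + d(y,w) − d(x,y))`. -/
noncomputable def gromovProd {X : Type} [MetricSpace X] (x y w : X) : ℝ :=
  (dist x w + dist y w - dist x y) / 2

/-- Gromov `δ`-hyperbolicity (four point condition). -/
def GromovHyperbolic (X : Type) [MetricSpace X] (δ : ℝ) : Prop :=
  ∀ x y z w : X, min (gromovProd x y w) (gromovProd y z w) - δ ≤ gromovProd x z w

/-- A geodesic metric space: any two points are joined by a geodesic segment. -/
def GeodesicSpace (X : Type) [MetricSpace X] : Prop :=
  ∀ x y : X, ∃ γ : ℝ → X, γ 0 = x ∧ γ (dist x y) = y ∧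
    ∀ s t : ℝ, s ∈ Set.Icc 0 (dist x y) → t ∈ Set.Icc 0 (dist x y) →
      dist (γ s) (γ t) = |s - t|

/-- there are functions `L, C₀ : [0,∞) → (0,∞)` such that for every proper
geodesic `δ`-hyperbolic space `X` and every isometry `g` of `X` whose displacement `ρ_g`
is attained and satisfies `ρ_g ≥ L δ`, the set `Min(g)` of points of minimal displacement
is contained in the `C₀ δ`-neighbourhood of the image of any `g`-axis `f` through a point
of `Min(g)`. -/
theorem min_set_close_to_axis :
    ∃ L C₀ : ℝ → ℝ,
      (∀ δ : ℝ, 0 ≤ δ → 0 < L δ ∧ 0 < C₀ δ) ∧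
      ∀ (δ : ℝ), 0 ≤ δ →
      ∀ (X : Type) (_ : MetricSpace X), ProperSpace X → GeodesicSpace X →
        GromovHyperbolic X δ →
      ∀ (g : X → X), Isometry g → Function.Bijective g →
      ∀ (ρ : ℝ), (∀ y : X, ρ ≤ dist y (g y)) → L δ ≤ ρ →
      ∀ x : X, dist x (g x) = ρ →
      ∀ f : ℝ → X, f 0 = x → (∀ t : ℝ, f (t + ρ) = g (f t)) →
        (∀ s t : ℝ, s ∈ Set.Icc (0:ℝ) ρ → t ∈ Set.Icc (0:ℝ) ρ →
          dist (f s) (f t) = |s - t|) →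
      ∀ y : X, dist y (g y) = ρ → Metric.infDist y (Set.range f) ≤ C₀ δ := by
  refine ⟨fun δ => 8 * δ + 4, fun δ => 5 * δ + 1, fun δ hδ => ⟨by dsimp only; linarith, by dsimp only; linarith⟩, ?_⟩
  intro δ hδ X _ _hprop _hgeo hhyp g hg hgbij ρ hρmin hLρ x hx f hf0 hfρ hfiso y hy
  have hLρ' : 8 * δ + 4 ≤ ρ := hLρ
  have hρpos : (0:ℝ) < ρ := by linarith
  set e : X ≃ X := Equiv.ofBijective g hgbij with he
  have hecoe : ∀ z : X, e z = g z := fun z => rfl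
  have hesymm : ∀ z : X, g (e.symm z) = z := fun z => e.apply_symm_apply z
  have hgsym : Isometry ⇑e.symm := by
    refine Isometry.of_dist_eq fun a b => ?_
    have h := hg.dist_eq (e.symm a) (e.symm b)
    rw [hesymm, hesymm] at h
    exact h.symm
  -- key: `f (t + n ρ) = g^n (f t)` for all integers `n`, and each `g^n` is an isometry
  have key : ∀ n : ℤ, (∀ t : ℝ, f (t + (n : ℝ) * ρ) = (e ^ n) (f t)) ∧ Isometry ⇑(e ^ n) := by
    intro n
    induction n using Int.induction_on with
    | zero =>
      constructor
      · intro t; simp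
      · simp [Isometry.of_dist_eq fun a b => rfl, isometry_id]
    | succ k ih =>
      have hpow : ∀ z : X, (e ^ ((k : ℤ) + 1)) z = (e ^ (k : ℤ)) (g z) := by
        intro z
        rw [zpow_add_one]
        rfl
      constructor
      · intro t
        have harg : t + ((((k : ℤ) + 1) : ℤ) : ℝ) * ρ = (t + ρ) + ((k : ℤ) : ℝ) * ρ := by
          push_cast; ring
        rw [harg, ih.1 (t + ρ), hfρ t, hpow]
      · have hco : ⇑(e ^ ((k : ℤ) + 1)) = ⇑(e ^ (k : ℤ)) ∘ g := funext fun z => hpow z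
        rw [hco]
        exact ih.2.comp hg
    | pred k ih =>
      have hpow : ∀ z : X, (e ^ (-(k : ℤ) - 1)) z = (e ^ (-(k : ℤ))) (e.symm z) := by
        intro z
        rw [zpow_sub_one]
        rfl
      constructor
      · intro t
        have h1 : g (f (t + ((-(k : ℤ) - 1 : ℤ) : ℝ) * ρ)) = (e ^ (-(k : ℤ))) (f t) := by
          have harg : t + ((-(k : ℤ) - 1 : ℤ) : ℝ) * ρ + ρ = t + ((-(k : ℤ) : ℤ) : ℝ) * ρ := by
            push_cast; ring
          rw [← hfρ, harg, ih.1]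
        have hpow2 : ∀ z : X, (e ^ (-(k : ℤ) - 1)) z = e.symm ((e ^ (-(k : ℤ))) z) := by
          intro z
          have hmul : e ^ (-(k : ℤ) - 1) = e⁻¹ * e ^ (-(k : ℤ)) := by
            rw [← zpow_neg_one, ← zpow_add]
            congr 1
            ring
          rw [hmul]
          rfl
        have h2 : g ((e ^ (-(k : ℤ) - 1)) (f t)) = (e ^ (-(k : ℤ))) (f t) := by
          rw [hpow2, hesymm]
        exact hgbij.1 (h1.trans h2.symm)
      · have hco : ⇑(e ^ (-(k : ℤ) - 1)) = ⇑(e ^ (-(k : ℤ))) ∘ ⇑e.symm := funext fun z => hpow z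
        rw [hco]
        exact ih.2.comp hgsym
  -- `f` is isometric on every window of length `ρ`
  have hwin : ∀ t₀ a b : ℝ, 0 ≤ a → a ≤ b → b ≤ ρ →
      dist (f (t₀ + a)) (f (t₀ + b)) = b - a := by
    intro t₀ a b ha hab hb
    set n : ℤ := ⌊t₀ / ρ⌋ with hn
    set c : ℝ := t₀ - (n : ℝ) * ρ with hc
    have hc0 : 0 ≤ c := Int.sub_floor_div_mul_nonneg t₀ hρpos
    have hcρ : c < ρ := Int.sub_floor_div_mul_lt t₀ hρpos
    have hfa : f (t₀ + a) = (e ^ n) (f (c + a)) := by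
      have harg : t₀ + a = (c + a) + (n : ℝ) * ρ := by rw [hc]; ring
      rw [harg, (key n).1]
    have hfb : f (t₀ + b) = (e ^ n) (f (c + b)) := by
      have harg : t₀ + b = (c + b) + (n : ℝ) * ρ := by rw [hc]; ring
      rw [harg, (key n).1]
    set u : ℝ := c + a with hu
    set v : ℝ := c + b with hv
    have hu0 : 0 ≤ u := by rw [hu]; linarith
    have huv : u ≤ v := by rw [hu, hv]; linarith
    have hvu : v - u ≤ ρ := by rw [hu, hv]; linarith
    have hv2 : v < 2 * ρ := by rw [hv]; linarith
    have hgoal : dist (f u) (f v) = v - u := by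
      rcases le_or_gt v ρ with hvle | hvgt
      · have h := hfiso u v ⟨hu0, by linarith⟩ ⟨by linarith, hvle⟩
        rw [abs_sub_comm, abs_of_nonneg (show (0:ℝ) ≤ v - u by linarith)] at h
        exact h
      · rcases le_or_gt ρ u with hule | hult
        · have h1 : f u = g (f (u - ρ)) := by rw [← hfρ]; congr 1; ring
          have h2 : f v = g (f (v - ρ)) := by rw [← hfρ]; congr 1; ring
          have h := hfiso (u - ρ) (v - ρ) ⟨by linarith, by linarith⟩ ⟨by linarith, by linarith⟩
          rw [abs_sub_comm, abs_of_nonneg (show (0:ℝ) ≤ v - ρ - (u - ρ) by linarith)] at h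
          rw [h1, h2, hg.dist_eq]
          linarith [h]
        · -- u < ρ < v
          have hρf : f ρ = g (f 0) := by rw [← hfρ]; congr 1; ring
          have hvf : f v = g (f (v - ρ)) := by rw [← hfρ]; congr 1; ring
          have huρf : f (u + ρ) = g (f u) := hfρ u
          have h1 : dist (f ρ) (f v) = v - ρ := by
            have h := hfiso 0 (v - ρ) ⟨le_refl 0, le_of_lt hρpos⟩ ⟨by linarith, by linarith⟩
            rw [abs_sub_comm, abs_of_nonneg (show (0:ℝ) ≤ v - ρ - 0 by linarith)] at h
            rw [hρf, hvf, hg.dist_eq]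
            linarith [h]
          have h2 : dist (f u) (f ρ) = ρ - u := by
            have h := hfiso u ρ ⟨hu0, le_of_lt hult⟩ ⟨le_of_lt hρpos, le_refl ρ⟩
            rw [abs_sub_comm, abs_of_nonneg (show (0:ℝ) ≤ ρ - u by linarith)] at h
            exact h
          have h3 : dist (f v) (f (u + ρ)) = u + ρ - v := by
            have h := hfiso (v - ρ) u ⟨by linarith, by linarith⟩ ⟨hu0, le_of_lt hult⟩
            rw [abs_of_nonpos (show v - ρ - u ≤ (0:ℝ) by linarith)] at h
            rw [hvf, huρf, hg.dist_eq]
            linarith [h]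
          have h4 : ρ ≤ dist (f u) (f (u + ρ)) := by
            rw [huρf]; exact hρmin (f u)
          have htri1 : dist (f u) (f (u + ρ)) ≤ dist (f u) (f v) + dist (f v) (f (u + ρ)) :=
            dist_triangle _ _ _
          have htri2 : dist (f u) (f v) ≤ dist (f u) (f ρ) + dist (f ρ) (f v) :=
            dist_triangle _ _ _
          linarith
    rw [hfa, hfb, (key n).2.dist_eq, hgoal, hu, hv]
    ring
  -- main argument
  by_contra hcon
  push_neg at hcon
  have hSne : (Set.range f).Nonempty := Set.range_nonempty f
  set D : ℝ := Metric.infDist y (Set.range f) with hD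
  have hD5 : 5 * δ + 1 < D := hcon
  have hDlt : D < D + 1/2 := by linarith
  obtain ⟨z, hzS, hdz⟩ := (Metric.infDist_lt_iff hSne).1 hDlt
  obtain ⟨t₀, rfl⟩ := hzS
  set d : ℝ := dist y (f t₀) with hd
  have hdD : D ≤ d := Metric.infDist_le_dist_of_mem (Set.mem_range_self t₀)
  -- basic distances
  have hππ' : dist (f t₀) (f (t₀ + ρ)) = ρ := by
    have h := hwin t₀ 0 ρ (le_refl 0) (le_of_lt hρpos) (le_refl ρ)
    rw [add_zero] at h; linarith [h]
  have hgπ : f (t₀ + ρ) = g (f t₀) := hfρ t₀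
  have hgyd : dist (g y) (f (t₀ + ρ)) = d := by
    rw [hgπ, hg.dist_eq, hd]
  -- Step 1: the Gromov product t := (y | gπ)_π is < 2δ + 1/2
  set t : ℝ := gromovProd y (f (t₀ + ρ)) (f t₀) with ht
  have htval : t = (d + ρ - dist y (f (t₀ + ρ))) / 2 := by
    rw [ht]; simp only [gromovProd]
    linarith [hd, dist_comm (f (t₀ + ρ)) (f t₀), hππ']
  have ht0 : 0 ≤ t := by
    have htri := dist_triangle y (f t₀) (f (t₀ + ρ))
    linarith [htval, hd, hππ']
  have htρ : t ≤ ρ := by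
    have htri := dist_triangle y (f (t₀ + ρ)) (f t₀)
    linarith [htval, hd, hππ', dist_comm (f (t₀ + ρ)) (f t₀)]
  have hdπw : dist (f t₀) (f (t₀ + t)) = t := by
    have h := hwin t₀ 0 t (le_refl 0) ht0 htρ
    rw [add_zero] at h; linarith [h]
  have hdwπ' : dist (f (t₀ + t)) (f (t₀ + ρ)) = ρ - t := hwin t₀ t ρ ht0 htρ (le_refl ρ)
  have hstep1 : t < 2 * δ + 1/2 := by
    have h4pt := hhyp y (f (t₀ + ρ)) (f (t₀ + t)) (f t₀)
    have hprod2 : gromovProd (f (t₀ + ρ)) (f (t₀ + t)) (f t₀) = t := by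
      simp only [gromovProd]
      linarith [dist_comm (f (t₀ + ρ)) (f t₀), hππ', dist_comm (f (t₀ + t)) (f t₀), hdπw,
        dist_comm (f (t₀ + ρ)) (f (t₀ + t)), hdwπ']
    rw [hprod2, ← ht, min_self] at h4pt
    have hprod3 : gromovProd y (f (t₀ + t)) (f t₀) =
        (d + t - dist y (f (t₀ + t))) / 2 := by
      simp only [gromovProd]
      linarith [hd, dist_comm (f (t₀ + t)) (f t₀), hdπw]
    have hDw : D ≤ dist y (f (t₀ + t)) :=
      Metric.infDist_le_dist_of_mem (Set.mem_range_self (t₀ + t))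
    linarith [h4pt, hprod3, hDw, hdz, hd]
  have hP : d + ρ - 4 * δ - 1 < dist y (f (t₀ + ρ)) := by linarith [htval, hstep1]
  -- Step 2: the Gromov product s := (gy | π)_gπ is < 2δ + 1/2
  set s : ℝ := gromovProd (g y) (f t₀) (f (t₀ + ρ)) with hs
  have hsval : s = (d + ρ - dist (g y) (f t₀)) / 2 := by
    rw [hs]; simp only [gromovProd]
    linarith [hgyd, hππ']
  have hs0 : 0 ≤ s := by
    have htri := dist_triangle (g y) (f (t₀ + ρ)) (f t₀)
    linarith [hsval, hgyd, dist_comm (f (t₀ + ρ)) (f t₀), hππ']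
  have hsρ : s ≤ ρ := by
    have htri := dist_triangle (g y) (f t₀) (f (t₀ + ρ))
    linarith [hsval, hgyd, hππ']
  have hdw'π' : dist (f (t₀ + (ρ - s))) (f (t₀ + ρ)) = s := by
    have h := hwin t₀ (ρ - s) ρ (by linarith) (by linarith) (le_refl ρ)
    linarith [h]
  have hdπw' : dist (f t₀) (f (t₀ + (ρ - s))) = ρ - s := by
    have h := hwin t₀ 0 (ρ - s) (le_refl 0) (by linarith) (by linarith)
    rw [add_zero] at h; linarith [h]
  have hw'g : f (t₀ + (ρ - s)) = g (f (t₀ - s)) := by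
    rw [← hfρ]; congr 1; ring
  have hstep2 : s < 2 * δ + 1/2 := by
    have h4pt := hhyp (g y) (f t₀) (f (t₀ + (ρ - s))) (f (t₀ + ρ))
    have hprod2 : gromovProd (f t₀) (f (t₀ + (ρ - s))) (f (t₀ + ρ)) = s := by
      simp only [gromovProd]
      linarith [hππ', hdw'π', hdπw']
    rw [hprod2, ← hs, min_self] at h4pt
    have hgyw' : dist (g y) (f (t₀ + (ρ - s))) = dist y (f (t₀ - s)) := by
      rw [hw'g, hg.dist_eq]
    have hprod3 : gromovProd (g y) (f (t₀ + (ρ - s))) (f (t₀ + ρ)) =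
        (d + s - dist y (f (t₀ - s))) / 2 := by
      simp only [gromovProd]
      linarith [hgyd, hdw'π', hgyw']
    have hDw : D ≤ dist y (f (t₀ - s)) :=
      Metric.infDist_le_dist_of_mem (Set.mem_range_self (t₀ - s))
    linarith [h4pt, hprod3, hDw, hdz, hd]
  have hQ : d + ρ - 4 * δ - 1 < dist (g y) (f t₀) := by linarith [hsval, hstep2]
  -- Final four-point inequality at base y
  have h4pt := hhyp (f t₀) (f (t₀ + ρ)) (g y) y
  have hM1 : gromovProd (f t₀) (f (t₀ + ρ)) y = (d + dist y (f (t₀ + ρ)) - ρ) / 2 := by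
    simp only [gromovProd]
    linarith [dist_comm (f t₀) y, hd, dist_comm (f (t₀ + ρ)) y, hππ']
  have hM2 : gromovProd (f (t₀ + ρ)) (g y) y = (dist y (f (t₀ + ρ)) + ρ - d) / 2 := by
    simp only [gromovProd]
    linarith [dist_comm (f (t₀ + ρ)) y, dist_comm (g y) y, hy, hgyd, dist_comm (f (t₀ + ρ)) (g y)]
  have hM3 : gromovProd (f t₀) (g y) y = (d + ρ - dist (g y) (f t₀)) / 2 := by
    simp only [gromovProd]
    linarith [dist_comm (f t₀) y, hd, dist_comm (g y) y, hy, dist_comm (f t₀) (g y)]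
  rw [hM1, hM2, hM3] at h4pt
  have hmin : 3 * δ + 1/2 < min ((d + dist y (f (t₀ + ρ)) - ρ) / 2)
      ((dist y (f (t₀ + ρ)) + ρ - d) / 2) :=
    lt_min (by linarith [hP]) (by linarith [hP])
  linarith [hmin, h4pt, hQ, hdz, hd]
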